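/- (Koma–Tasaki lemma, second part: ratio bound.) Let ρ be a density matrix, O⁺ = Q + R matrices with Q·R = R·Q, O⁻ := (O⁺)†, and reals o > 0, 0 < μ ≤ 1, N > 0, a ≥ 1 and a natural number M ≥ 1. Assume: ‖O⁺‖ ≤ o·N; ‖R‖ ≤ o·a; ‖[O⁺, O⁻]‖ ≤ 4·o²·N; ‖[Q, Q†]‖ ≤ 4·o²·N; tr(ρ·(O⁺·O⁻ + O⁻·O⁺)) ≥ 4·(μ·o·N)²; N ≥ 16·a²/μ²; and M ≤ μ²·N/(16·a). Then, with a_M := tr(Q^M · ρ · (Q†)^M), the real number tr((O⁺)^M · ρ · (O⁻)^M) satisfies tr((O⁺)^M · ρ · (O⁻)^M) ≥ (2 − exp(μ/8)) · a_M > 0. -/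

import Mathlib

open Matrix
open scoped ComplexOrder Matrix.Norms.L2Operator

/-- `a_m = tr(Q^m · ρ · (Q†)^m)`, a nonnegative real number. -/
noncomputable def ktA {n : Type*} [Fintype n] [DecidableEq n]
    (ρ Q : Matrix n n ℂ) (m : ℕ) : ℝ :=
  ((Q ^ m * ρ * Qᴴ ^ m).trace).re

section KTAux

open scoped ComplexInnerProductSpace
open scoped MatrixOrder

set_option linter.unusedSectionVars false

variable {n : Type*} [Fintype n] [DecidableEq n]


lemma diag_as_inner (B C : Matrix n n ℂ) (i : n) :
    (B * C * Bᴴ) i i =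
      (inner ℂ ((WithLp.equiv 2 (n → ℂ)).symm (fun k => star (B i k)))
        ((WithLp.equiv 2 (n → ℂ)).symm (C *ᵥ (fun k => star (B i k)))) : ℂ) := by
  simp only [PiLp.inner_apply, RCLike.inner_apply', WithLp.equiv_symm_apply, PiLp.toLp_apply,
    Matrix.mul_apply, Matrix.mulVec, Matrix.conjTranspose_apply, dotProduct,
    starRingEnd_apply, star_star]
  simp only [Finset.sum_mul, Finset.mul_sum]
  rw [Finset.sum_comm]
  congr 1; ext j; congr 1; ext k; ring

lemma ktPsdFactor (P : Matrix n n ℂ) (hP : P.PosSemidef) : ∃ B : Matrix n n ℂ, P = Bᴴ * B := by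
  obtain ⟨B, hB⟩ := CStarAlgebra.nonneg_iff_eq_star_mul_self.mp hP.nonneg
  exact ⟨B, by rw [hB, star_eq_conjTranspose]⟩

/-- For PSD `P`, `|tr(P C)| ≤ ‖C‖ * tr(P).re`. -/
lemma trace_psd_mul_le (P C : Matrix n n ℂ) (hP : P.PosSemidef) :
    ‖(P * C).trace‖ ≤ ‖C‖ * (P.trace).re := by
  obtain ⟨B, rfl⟩ := ktPsdFactor P hP
  have h1 : (Bᴴ * B * C).trace = (B * C * Bᴴ).trace := (Matrix.trace_mul_cycle B C Bᴴ).symm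
  set x : n → EuclideanSpace ℂ n := fun i => (WithLp.equiv 2 (n → ℂ)).symm (fun k => star (B i k))
    with hxdef
  have hx2 : ∀ i, ‖x i‖ ^ 2 = ∑ k, Complex.normSq (B i k) := by
    intro i
    rw [EuclideanSpace.norm_eq, Real.sq_sqrt (by positivity)]
    simp [hxdef, Complex.sq_norm, WithLp.equiv_symm_apply, PiLp.toLp_apply]
  have htr : ((Bᴴ * B).trace).re = ∑ i, ‖x i‖ ^ 2 := by
    simp only [hx2, Matrix.trace, Matrix.diag, Matrix.mul_apply, Matrix.conjTranspose_apply]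
    rw [Finset.sum_comm]
    simp only [Complex.re_sum]
    congr 1; ext i; congr 1; ext k
    rw [show (star (B i k)) = (starRingEnd ℂ) (B i k) from rfl, ← Complex.normSq_eq_conj_mul_self]
    simp
  rw [h1, htr, Matrix.trace]
  calc ‖∑ i, (B * C * Bᴴ).diag i‖
      ≤ ∑ i, ‖(B * C * Bᴴ) i i‖ := by
        simpa using norm_sum_le Finset.univ (fun i => (B * C * Bᴴ) i i)
    _ ≤ ∑ i, ‖C‖ * ‖x i‖ ^ 2 := by
        apply Finset.sum_le_sum
        intro i _
        rw [diag_as_inner B C i]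
        have h2 : ‖(inner ℂ (x i) ((WithLp.equiv 2 (n → ℂ)).symm (C *ᵥ (fun k => star (B i k)))) : ℂ)‖
            ≤ ‖x i‖ * ‖((WithLp.equiv 2 (n → ℂ)).symm (C *ᵥ (fun k => star (B i k))) : EuclideanSpace ℂ n)‖ :=
          norm_inner_le_norm _ _
        have h3 : ‖((WithLp.equiv 2 (n → ℂ)).symm (C *ᵥ (fun k => star (B i k))) : EuclideanSpace ℂ n)‖
            ≤ ‖C‖ * ‖x i‖ := Matrix.l2_opNorm_mulVec C (x i)
        calc _ ≤ _ := h2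
          _ ≤ ‖x i‖ * (‖C‖ * ‖x i‖) := by
              apply mul_le_mul_of_nonneg_left h3 (norm_nonneg _)
          _ = ‖C‖ * ‖x i‖ ^ 2 := by ring
    _ = ‖C‖ * ∑ i, ‖x i‖ ^ 2 := by rw [Finset.mul_sum]

noncomputable def ktE (ρ : Matrix n n ℂ) (hρ : ρ.PosSemidef) (X : Matrix n n ℂ) :
    EuclideanSpace ℂ (n × n) :=
  (WithLp.equiv 2 (n × n → ℂ)).symm (fun p => (X * CFC.sqrt ρ) p.1 p.2)

variable {ρ : Matrix n n ℂ} (hρ : ρ.PosSemidef)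

lemma ktE_inner (X Y : Matrix n n ℂ) :
    (inner ℂ (ktE ρ hρ X) (ktE ρ hρ Y) : ℂ) = (Xᴴ * Y * ρ).trace := by
  have hs : CFC.sqrt ρ * CFC.sqrt ρ = ρ := CFC.sqrt_mul_sqrt_self ρ hρ.nonneg
  have hsH : (CFC.sqrt ρ)ᴴ = CFC.sqrt ρ := (Matrix.nonneg_iff_posSemidef.mp (CFC.sqrt_nonneg ρ)).1
  have h1 : (inner ℂ (ktE ρ hρ X) (ktE ρ hρ Y) : ℂ) = ((X * CFC.sqrt ρ)ᴴ * (Y * CFC.sqrt ρ)).trace := by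
    simp only [ktE, PiLp.inner_apply, RCLike.inner_apply', WithLp.equiv_symm_apply, PiLp.toLp_apply,
      Matrix.trace, Matrix.diag, Matrix.mul_apply, Matrix.conjTranspose_apply, starRingEnd_apply]
    rw [Fintype.sum_prod_type, Finset.sum_comm]
  rw [h1]
  have h2 : (X * CFC.sqrt ρ)ᴴ * (Y * CFC.sqrt ρ) = CFC.sqrt ρ * (Xᴴ * Y) * CFC.sqrt ρ := by
    simp only [Matrix.conjTranspose_mul, hsH]
    noncomm_ring
  rw [h2, Matrix.trace_mul_cycle, ← Matrix.mul_assoc, hs, ← Matrix.trace_mul_cycle]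

lemma ktE_norm_sq (X : Matrix n n ℂ) :
    ‖ktE ρ hρ X‖ ^ 2 = ((X * ρ * Xᴴ).trace).re := by
  rw [← inner_self_eq_norm_sq (𝕜 := ℂ), ktE_inner hρ, ← Matrix.trace_mul_cycle]
  rfl

lemma ktE_add (X Y : Matrix n n ℂ) : ktE ρ hρ (X + Y) = ktE ρ hρ X + ktE ρ hρ Y := by
  simp only [ktE, Matrix.add_mul]
  rfl

lemma psd_trace_re_nonneg (P : Matrix n n ℂ) (hP : P.PosSemidef) : 0 ≤ (P.trace).re := by
  obtain ⟨B, rfl⟩ := ktPsdFactor P hP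
  simp only [Matrix.trace, Matrix.diag, Matrix.mul_apply, Matrix.conjTranspose_apply,
    Complex.re_sum]
  apply Finset.sum_nonneg; intro k _
  apply Finset.sum_nonneg; intro i _
  rw [show (star (B i k)) = (starRingEnd ℂ) (B i k) from rfl, ← Complex.normSq_eq_conj_mul_self]
  exact Complex.normSq_nonneg _

lemma trace_psd_mul_re_abs (P C : Matrix n n ℂ) (hP : P.PosSemidef) :
    |((P * C).trace).re| ≤ ‖C‖ * (P.trace).re :=
  le_trans (Complex.abs_re_le_norm _) (trace_psd_mul_le P C hP)

lemma ktE_mul_le (B X : Matrix n n ℂ) :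
    ‖ktE ρ hρ (B * X)‖ ≤ ‖B‖ * ‖ktE ρ hρ X‖ := by
  have hP : (X * ρ * Xᴴ).PosSemidef := hρ.mul_mul_conjTranspose_same X
  have h1 : ‖ktE ρ hρ (B * X)‖ ^ 2 ≤ (‖B‖ * ‖ktE ρ hρ X‖) ^ 2 := by
    rw [ktE_norm_sq hρ]
    have he : (B * X) * ρ * (B * X)ᴴ = B * (X * ρ * Xᴴ) * Bᴴ := by
      simp only [Matrix.conjTranspose_mul]; noncomm_ring
    have htr : ((B * X) * ρ * (B * X)ᴴ).trace = ((X * ρ * Xᴴ) * (Bᴴ * B)).trace := by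
      rw [he, Matrix.trace_mul_cycle, Matrix.trace_mul_comm, Matrix.mul_assoc]
    rw [htr]
    calc (((X * ρ * Xᴴ) * (Bᴴ * B)).trace).re
        ≤ |(((X * ρ * Xᴴ) * (Bᴴ * B)).trace).re| := le_abs_self _
      _ ≤ ‖Bᴴ * B‖ * ((X * ρ * Xᴴ).trace).re := trace_psd_mul_re_abs _ _ hP
      _ = (‖B‖ * ‖ktE ρ hρ X‖) ^ 2 := by
          rw [Matrix.l2_opNorm_conjTranspose_mul_self, ← ktE_norm_sq hρ]; ring
  have h2 : 0 ≤ ‖B‖ * ‖ktE ρ hρ X‖ := by positivity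
  nlinarith [norm_nonneg (ktE ρ hρ (B * X))]

lemma ktE_pow_norm_sq (A : Matrix n n ℂ) (m : ℕ) :
    ‖ktE ρ hρ (A ^ m)‖ ^ 2 = ((A ^ m * ρ * Aᴴ ^ m).trace).re := by
  rw [ktE_norm_sq hρ]
  rw [Matrix.conjTranspose_pow]

set_option maxHeartbeats 1000000 in
include hρ in
/-- Key Cauchy–Schwarz recursion for `b m = tr(A^m ρ A†^m)`. -/
lemma ktR1 (A : Matrix n n ℂ) (c : ℝ) (hc : ‖A * Aᴴ - Aᴴ * A‖ ≤ c) (m : ℕ) :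
    (((A ^ (m+1) * ρ * Aᴴ ^ (m+1)).trace).re) ^ 2 ≤
      ((A ^ m * ρ * Aᴴ ^ m).trace).re *
        (((A ^ (m+2) * ρ * Aᴴ ^ (m+2)).trace).re
          + c * ((A ^ (m+1) * ρ * Aᴴ ^ (m+1)).trace).re) := by
  set D : Matrix n n ℂ := A * Aᴴ - Aᴴ * A with hD
  set b : ℕ → ℝ := fun k => ((A ^ k * ρ * Aᴴ ^ k).trace).re with hb
  have hbnn : ∀ k, 0 ≤ b k := by
    intro k
    have : (A ^ k * ρ * (A ^ k)ᴴ).PosSemidef := hρ.mul_mul_conjTranspose_same _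
    rw [Matrix.conjTranspose_pow] at this
    exact psd_trace_re_nonneg _ this
  set u := ktE ρ hρ (A ^ m)
  set v := ktE ρ hρ ((Aᴴ * A) * A ^ m)
  -- step 1 : b (m+1) = re ⟪u, v⟫
  have step1 : b (m+1) = (inner ℂ u v : ℂ).re := by
    rw [ktE_inner hρ]
    have h1 : (A ^ m)ᴴ * ((Aᴴ * A) * A ^ m) * ρ = (Aᴴ ^ (m+1) * A ^ (m+1)) * ρ := by
      rw [Matrix.conjTranspose_pow, pow_succ, pow_succ']
      noncomm_ring
    have h2 : (Aᴴ ^ (m+1) * A ^ (m+1) * ρ).trace = (A ^ (m+1) * ρ * Aᴴ ^ (m+1)).trace :=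
      (Matrix.trace_mul_cycle (A ^ (m+1)) ρ (Aᴴ ^ (m+1))).symm
    rw [h1, h2]
  -- step 2 : ‖v‖^2 ≤ b (m+2) + c * b (m+1)
  have step2 : ‖v‖ ^ 2 ≤ b (m+2) + c * b (m+1) := by
    rw [ktE_norm_sq hρ]
    have hcyc : ((Aᴴ * A * A ^ m) * ρ * (Aᴴ * A * A ^ m)ᴴ).trace
        = (ρ * ((Aᴴ * A * A ^ m)ᴴ * (Aᴴ * A * A ^ m))).trace := by
      rw [Matrix.trace_mul_cycle (Aᴴ * A * A ^ m) ρ ((Aᴴ * A * A ^ m)ᴴ),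
        Matrix.trace_mul_cycle ((Aᴴ * A * A ^ m)ᴴ) (Aᴴ * A * A ^ m) ρ, Matrix.mul_assoc]
    have hid : (Aᴴ * A * A ^ m)ᴴ * (Aᴴ * A * A ^ m)
        = Aᴴ ^ (m+2) * A ^ (m+2) + Aᴴ ^ (m+1) * D * A ^ (m+1) := by
      simp only [Matrix.conjTranspose_mul, Matrix.conjTranspose_pow,
        Matrix.conjTranspose_conjTranspose, hD]
      rw [show m+2 = m+1+1 from rfl, pow_succ' A (m+1), pow_succ' A m,
          pow_succ Aᴴ (m+1), pow_succ Aᴴ m]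
      noncomm_ring
    have htrid : ((Aᴴ * A * A ^ m) * ρ * (Aᴴ * A * A ^ m)ᴴ).trace =
        (A ^ (m+2) * ρ * Aᴴ ^ (m+2)).trace + ((A ^ (m+1) * ρ * Aᴴ ^ (m+1)) * D).trace := by
      rw [hcyc, hid, Matrix.mul_add, Matrix.trace_add]
      congr 1
      · rw [← Matrix.mul_assoc, Matrix.trace_mul_cycle]
      · rw [← Matrix.mul_assoc, ← Matrix.mul_assoc,
          Matrix.trace_mul_cycle (ρ * Aᴴ ^ (m+1)) D (A ^ (m+1)), ← Matrix.mul_assoc]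
    rw [htrid, Complex.add_re]
    have hP : (A ^ (m+1) * ρ * Aᴴ ^ (m+1)).PosSemidef := by
      have := hρ.mul_mul_conjTranspose_same (A ^ (m+1))
      rwa [Matrix.conjTranspose_pow] at this
    have := trace_psd_mul_re_abs _ D hP
    have habs : (((A ^ (m+1) * ρ * Aᴴ ^ (m+1)) * D).trace).re ≤ c * b (m+1) := by
      calc (((A ^ (m+1) * ρ * Aᴴ ^ (m+1)) * D).trace).re
          ≤ |(((A ^ (m+1) * ρ * Aᴴ ^ (m+1)) * D).trace).re| := le_abs_self _
        _ ≤ ‖D‖ * b (m+1) := this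
        _ ≤ c * b (m+1) := mul_le_mul_of_nonneg_right hc (hbnn _)
    linarith
  -- combine
  have hcs : b (m+1) ≤ ‖u‖ * ‖v‖ := by
    rw [step1]
    calc (inner ℂ u v : ℂ).re ≤ ‖(inner ℂ u v : ℂ)‖ := Complex.re_le_norm _
      _ = ‖(inner ℂ u v : ℂ)‖ := rfl
      _ ≤ ‖u‖ * ‖v‖ := norm_inner_le_norm u v
  have hu2 : ‖u‖ ^ 2 = b m := ktE_pow_norm_sq hρ A m
  have hbm1 : 0 ≤ b (m+1) := hbnn _
  calc (b (m+1)) ^ 2 ≤ (‖u‖ * ‖v‖) ^ 2 := by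
        apply pow_le_pow_left₀ hbm1 hcs
    _ = ‖u‖ ^ 2 * ‖v‖ ^ 2 := by ring
    _ ≤ b m * (b (m+2) + c * b (m+1)) := by
        rw [hu2]
        apply mul_le_mul_of_nonneg_left step2 (hbnn m)

/-- Abstract growth lemma for the Koma–Tasaki recursion. -/
lemma ktGrowth (b : ℕ → ℝ) (c t : ℝ) (hc : 0 ≤ c)
    (hnn : ∀ k, 0 ≤ b k)
    (hR : ∀ m, (b (m+1))^2 ≤ b m * (b (m+2) + c * b (m+1)))
    (hb0 : b 0 = 1) (ht : t = b 1) (K : ℕ) (hK : (K:ℝ) * c < t) :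
    ∀ k, k ≤ K → 0 < b k ∧ (t - k * c) * b k ≤ b (k+1) := by
  intro k
  induction k with
  | zero =>
    intro _
    refine ⟨by rw [hb0]; norm_num, by rw [hb0, ht]; push_cast; simp⟩
  | succ k ih =>
    intro hkK
    have hk' : k ≤ K := Nat.le_of_succ_le hkK
    obtain ⟨hbk, hstep⟩ := ih hk'
    have hkc : (k:ℝ) * c ≤ (K:ℝ) * c :=
      mul_le_mul_of_nonneg_right (by exact_mod_cast Nat.cast_le.mpr hk') hc
    have htk : 0 < t - (k:ℝ) * c := by linarith
    have hbk1 : 0 < b (k+1) := lt_of_lt_of_le (by positivity) hstep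
    refine ⟨hbk1, ?_⟩
    have h1 : (b (k+1))^2 ≤ b k * (b (k+2) + c * b (k+1)) := hR k
    have h2 : (t - (k:ℝ)*c) * b k * b (k+1) ≤ (b (k+1))^2 := by nlinarith
    have h3 : b k * ((t - ((k:ℕ)+1:ℝ)*c) * b (k+1)) ≤ b k * b (k+2) := by nlinarith
    have h4 := (mul_le_mul_iff_of_pos_left hbk).mp h3
    push_cast
    exact h4

set_option maxHeartbeats 1000000 in
/-- Arithmetic core: lower bound on `t = a₁` dominates the recursion losses. -/
lemma ktArith (o μ N a t : ℝ) (M : ℕ) (ho : 0 < o) (hμ0 : 0 < μ) (hμ1 : μ ≤ 1) (hN : 0 < N)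
    (ha : 1 ≤ a) (hNa : 16 * a ^ 2 / μ ^ 2 ≤ N) (hM : (M : ℝ) ≤ μ ^ 2 * N / (16 * a))
    (ht : 4 * (μ * o * N) ^ 2 - (4 * o ^ 2 * N + 4 * (o * N + o * a) * (o * a)
      + 2 * (o * a) ^ 2) ≤ 2 * t) :
    (μ * o * N) ^ 2 + ((M : ℝ) - 1) * (4 * o ^ 2 * N) ≤ t := by
  have ha0 : 0 < a := lt_of_lt_of_le one_pos ha
  have h16 : 16 * a ^ 2 ≤ μ ^ 2 * N := by
    rw [div_le_iff₀ (by positivity)] at hNa; nlinarith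
  have hN16' : 16 ≤ μ ^ 2 * N := by nlinarith
  have hμsq : μ ^ 2 ≤ 1 := by nlinarith
  have hNge : 16 ≤ N := by nlinarith [mul_le_mul_of_nonneg_right hμsq (le_of_lt hN)]
  have hMN : 16 * a * (M : ℝ) ≤ μ ^ 2 * N := by
    rw [le_div_iff₀ (by positivity)] at hM; nlinarith
  have hM16 : 16 * (M : ℝ) ≤ μ ^ 2 * N := by nlinarith [Nat.cast_nonneg (α := ℝ) M]
  have e1 : 4 * N ≤ μ ^ 2 * N ^ 2 / 4 := by
    nlinarith [mul_le_mul_of_nonneg_right hN16' hN.le]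
  have e2 : 4 * a * N ≤ μ ^ 2 * N ^ 2 / 4 := by
    nlinarith [mul_le_mul_of_nonneg_right h16 hN.le, mul_pos ha0 hN]
  have e3 : 6 * a ^ 2 ≤ μ ^ 2 * N ^ 2 / 4 := by
    nlinarith [mul_le_mul h16 hNge (by norm_num) (by positivity : (0:ℝ) ≤ μ ^ 2 * N)]
  have e4 : 8 * N * (M : ℝ) ≤ μ ^ 2 * N ^ 2 / 2 := by
    nlinarith [mul_le_mul_of_nonneg_right hM16 hN.le]
  have key : 4 * N + 4 * a * N + 6 * a ^ 2 + 8 * N * (M : ℝ) ≤ 2 * μ ^ 2 * N ^ 2 := by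
    linarith
  have keyo := mul_le_mul_of_nonneg_left key (sq_nonneg o)
  nlinarith [keyo]

lemma ktExpLtTwo {x : ℝ} (hx : x ≤ 1/8) : Real.exp x < 2 := by
  have h2 : (2:ℝ) = Real.exp (Real.log 2) := (Real.exp_log two_pos).symm
  rw [h2]
  apply Real.exp_lt_exp.mpr
  have := Real.log_two_gt_d9
  linarith

lemma ktE_zero : ktE ρ hρ 0 = 0 := by
  simp only [ktE, Matrix.zero_mul]
  rfl

lemma ktE_smul (c : ℂ) (X : Matrix n n ℂ) : ktE ρ hρ (c • X) = c • ktE ρ hρ X := by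
  simp only [ktE, Matrix.smul_mul]
  rfl

lemma ktE_sum {ι : Type*} (s : Finset ι) (f : ι → Matrix n n ℂ) :
    ktE ρ hρ (∑ i ∈ s, f i) = ∑ i ∈ s, ktE ρ hρ (f i) := by
  classical
  induction s using Finset.induction with
  | empty => simp [ktE_zero]
  | insert _ _ h ih => rw [Finset.sum_insert h, ktE_add, ih, Finset.sum_insert h]


end KTAux

set_option maxHeartbeats 2000000 in
/-- Koma–Tasaki lemma, second part (ratio bound): under extensive fluctuations of a raising
order parameter `O⁺ = Q + R`, one has
`tr((O⁺)^M ρ (O⁻)^M) ≥ (2 − exp(μ/8)) · a_M > 0`, where `a_M = tr(Q^M ρ (Q†)^M)`. -/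
theorem koma_tasaki_lemma_ratio_bound
    {n : Type*} [Fintype n] [DecidableEq n] [Nonempty n]
    (ρ : Matrix n n ℂ) (hρ : ρ.PosSemidef) (hρtr : ρ.trace = 1)
    (Op Q R : Matrix n n ℂ) (hOp : Op = Q + R) (hQR : Q * R = R * Q)
    (o μ N a : ℝ) (M : ℕ)
    (ho : 0 < o) (hμ0 : 0 < μ) (hμ1 : μ ≤ 1) (hN : 0 < N) (ha : 1 ≤ a) (hM1 : 1 ≤ M)
    (hOpn : ‖Op‖ ≤ o * N)
    (hRn : ‖R‖ ≤ o * a)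
    (hcommOp : ‖Op * Opᴴ - Opᴴ * Op‖ ≤ 4 * o ^ 2 * N)
    (hcommQ : ‖Q * Qᴴ - Qᴴ * Q‖ ≤ 4 * o ^ 2 * N)
    (hfluc : 4 * (μ * o * N) ^ 2 ≤ ((ρ * (Op * Opᴴ + Opᴴ * Op)).trace).re)
    (hNa : 16 * a ^ 2 / μ ^ 2 ≤ N)
    (hM : (M : ℝ) ≤ μ ^ 2 * N / (16 * a)) :
    0 < (2 - Real.exp (μ / 8)) * ktA ρ Q M ∧
    (2 - Real.exp (μ / 8)) * ktA ρ Q M ≤ ((Op ^ M * ρ * Opᴴ ^ M).trace).re := by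
  have ha0 : 0 < a := lt_of_lt_of_le one_pos ha
  have hQn : ‖Q‖ ≤ o * N + o * a := by
    have hq : Q = Op - R := by rw [hOp]; abel
    calc ‖Q‖ = ‖Op - R‖ := by rw [← hq]
      _ ≤ ‖Op‖ + ‖R‖ := norm_sub_le _ _
      _ ≤ o * N + o * a := add_le_add hOpn hRn
  set av : ℕ → ℝ := fun m => ((Q ^ m * ρ * Qᴴ ^ m).trace).re with hav
  have hnn : ∀ k, 0 ≤ av k := by
    intro k
    have h := hρ.mul_mul_conjTranspose_same (Q ^ k)
    rw [Matrix.conjTranspose_pow] at h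
    exact psd_trace_re_nonneg _ h
  have hb0 : av 0 = 1 := by
    simp only [hav, pow_zero, Matrix.one_mul, Matrix.mul_one, hρtr, Complex.one_re]
  have hRrec : ∀ m, (av (m+1))^2 ≤ av m * (av (m+2) + (4 * o ^ 2 * N) * av (m+1)) :=
    fun m => ktR1 hρ Q (4 * o ^ 2 * N) hcommQ m
  -- lower bound on av 1
  have hcyc1 : (Q * ρ * Qᴴ).trace = (ρ * (Qᴴ * Q)).trace := by
    rw [Matrix.trace_mul_cycle Q ρ Qᴴ, Matrix.trace_mul_cycle Qᴴ Q ρ, Matrix.mul_assoc]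
  set W : Matrix n n ℂ := (Q * Qᴴ - Qᴴ * Q) + Q * Rᴴ + R * Qᴴ + Qᴴ * R + Rᴴ * Q
      + R * Rᴴ + Rᴴ * R with hWdef
  have hidQ : Qᴴ * Q + Qᴴ * Q = (Op * Opᴴ + Opᴴ * Op) - W := by
    rw [hOp, hWdef]
    simp only [Matrix.conjTranspose_add]
    noncomm_ring
  have hQH : ‖Qᴴ‖ = ‖Q‖ := Matrix.l2_opNorm_conjTranspose Q
  have hRH : ‖Rᴴ‖ = ‖R‖ := Matrix.l2_opNorm_conjTranspose R
  have hn1 : ‖Q * Rᴴ‖ ≤ (o*N + o*a) * (o*a) :=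
    le_trans (Matrix.l2_opNorm_mul Q Rᴴ)
      (mul_le_mul hQn (hRH ▸ hRn) (norm_nonneg _) (by positivity))
  have hn2 : ‖R * Qᴴ‖ ≤ (o*a) * (o*N + o*a) :=
    le_trans (Matrix.l2_opNorm_mul R Qᴴ)
      (mul_le_mul hRn (hQH ▸ hQn) (norm_nonneg _) (by positivity))
  have hn3 : ‖Qᴴ * R‖ ≤ (o*N + o*a) * (o*a) :=
    le_trans (Matrix.l2_opNorm_mul Qᴴ R)
      (mul_le_mul (hQH ▸ hQn) hRn (norm_nonneg _) (by positivity))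
  have hn4 : ‖Rᴴ * Q‖ ≤ (o*a) * (o*N + o*a) :=
    le_trans (Matrix.l2_opNorm_mul Rᴴ Q)
      (mul_le_mul (hRH ▸ hRn) hQn (norm_nonneg _) (by positivity))
  have hn5 : ‖R * Rᴴ‖ ≤ (o*a) * (o*a) :=
    le_trans (Matrix.l2_opNorm_mul R Rᴴ)
      (mul_le_mul hRn (hRH ▸ hRn) (norm_nonneg _) (by positivity))
  have hn6 : ‖Rᴴ * R‖ ≤ (o*a) * (o*a) :=
    le_trans (Matrix.l2_opNorm_mul Rᴴ R)
      (mul_le_mul (hRH ▸ hRn) hRn (norm_nonneg _) (by positivity))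
  have hW : ‖W‖ ≤ 4 * o ^ 2 * N + 4 * (o * N + o * a) * (o * a) + 2 * (o * a) ^ 2 := by
    rw [hWdef]
    have t1 := norm_add_le ((Q * Qᴴ - Qᴴ * Q) + Q * Rᴴ + R * Qᴴ + Qᴴ * R + Rᴴ * Q + R * Rᴴ) (Rᴴ * R)
    have t2 := norm_add_le ((Q * Qᴴ - Qᴴ * Q) + Q * Rᴴ + R * Qᴴ + Qᴴ * R + Rᴴ * Q) (R * Rᴴ)
    have t3 := norm_add_le ((Q * Qᴴ - Qᴴ * Q) + Q * Rᴴ + R * Qᴴ + Qᴴ * R) (Rᴴ * Q)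
    have t4 := norm_add_le ((Q * Qᴴ - Qᴴ * Q) + Q * Rᴴ + R * Qᴴ) (Qᴴ * R)
    have t5 := norm_add_le ((Q * Qᴴ - Qᴴ * Q) + Q * Rᴴ) (R * Qᴴ)
    have t6 := norm_add_le (Q * Qᴴ - Qᴴ * Q) (Q * Rᴴ)
    have e12 : (o*a) * (o*N + o*a) = (o*N + o*a) * (o*a) := by ring
    have e13 : (o*a) * (o*a) = (o*a)^2 := by ring
    linarith [hcommQ, hn1, hn2, hn3, hn4, hn5, hn6, t1, t2, t3, t4, t5, t6]
  have hρW : |((ρ * W).trace).re| ≤ ‖W‖ := by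
    have h := trace_psd_mul_re_abs ρ W hρ
    rw [hρtr] at h
    simpa using h
  have htr2 : (ρ * (Qᴴ * Q)).trace + (ρ * (Qᴴ * Q)).trace
      = (ρ * (Op * Opᴴ + Opᴴ * Op)).trace - (ρ * W).trace := by
    rw [← Matrix.trace_sub, ← Matrix.mul_sub, ← hidQ, Matrix.mul_add, Matrix.trace_add]
  have hav1 : av 1 = ((ρ * (Qᴴ * Q)).trace).re := by
    simp only [hav, pow_one]
    rw [hcyc1]
  have ht2 : 4 * (μ * o * N) ^ 2 - (4 * o ^ 2 * N + 4 * (o * N + o * a) * (o * a)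
      + 2 * (o * a) ^ 2) ≤ 2 * av 1 := by
    have := congrArg Complex.re htr2
    simp only [Complex.add_re, Complex.sub_re] at this
    rw [hav1]
    have habs := abs_le.mp hρW
    linarith [hfluc]
  have hT : (μ * o * N) ^ 2 + ((M : ℝ) - 1) * (4 * o ^ 2 * N) ≤ av 1 :=
    ktArith o μ N a (av 1) M ho hμ0 hμ1 hN ha hNa hM ht2
  set γ : ℝ := (μ * o * N) ^ 2 with hγdef
  have hγ : 0 < γ := by positivity
  have hc0 : (0:ℝ) ≤ 4 * o ^ 2 * N := by positivity
  have hMcast : ((M - 1 : ℕ) : ℝ) = (M : ℝ) - 1 := by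
    rw [Nat.cast_sub hM1, Nat.cast_one]
  have hK : ((M - 1 : ℕ) : ℝ) * (4 * o ^ 2 * N) < av 1 := by
    rw [hMcast]; linarith
  have growth := ktGrowth av (4 * o ^ 2 * N) (av 1) hc0 hnn hRrec hb0 rfl (M - 1) hK
  have ratio : ∀ m, m < M → γ * av m ≤ av (m + 1) := by
    intro m hm
    have hm' : m ≤ M - 1 := by omega
    obtain ⟨hp, hs⟩ := growth m hm'
    have hmle : (m : ℝ) ≤ (M : ℝ) - 1 := by
      have : (m : ℝ) + 1 ≤ (M : ℝ) := by exact_mod_cast Nat.succ_le_of_lt hm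
      linarith
    have hmc : (m : ℝ) * (4 * o ^ 2 * N) ≤ ((M : ℝ) - 1) * (4 * o ^ 2 * N) :=
      mul_le_mul_of_nonneg_right hmle hc0
    have hge : γ ≤ av 1 - (m : ℝ) * (4 * o ^ 2 * N) := by rw [hγdef]; linarith
    calc γ * av m ≤ (av 1 - (m : ℝ) * (4 * o ^ 2 * N)) * av m :=
          mul_le_mul_of_nonneg_right hge (hnn m)
      _ ≤ av (m + 1) := hs
  have hMpos : 0 < av M := by
    have h := ratio (M - 1) (by omega)
    have heq : M - 1 + 1 = M := by omega
    rw [heq] at h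
    obtain ⟨hp, _⟩ := growth (M - 1) le_rfl
    calc (0:ℝ) < γ * av (M - 1) := mul_pos hγ hp
      _ ≤ av M := h
  have descent : ∀ k, k ≤ M → γ ^ k * av (M - k) ≤ av M := by
    intro k
    induction k with
    | zero => intro _; simp
    | succ k ih =>
      intro hk
      have h1 : γ * av (M - (k+1)) ≤ av (M - (k+1) + 1) := ratio _ (by omega)
      have h2 : M - (k+1) + 1 = M - k := by omega
      rw [h2] at h1
      calc γ ^ (k+1) * av (M - (k+1)) = γ ^ k * (γ * av (M - (k+1))) := by ring
        _ ≤ γ ^ k * av (M - k) := mul_le_mul_of_nonneg_left h1 (by positivity)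
        _ ≤ av M := ih (by omega)
  -- part 2 : triangle inequality estimate
  have hnq : ∀ j, ‖ktE ρ hρ (Q ^ j)‖ ^ 2 = av j := fun j => ktE_pow_norm_sq hρ Q j
  have hdesc : ∀ k, k ≤ M →
      (μ * o * N) ^ k * ‖ktE ρ hρ (Q ^ (M - k))‖ ≤ ‖ktE ρ hρ (Q ^ M)‖ := by
    intro k hk
    have h := descent k hk
    have hsq : ((μ * o * N) ^ k * ‖ktE ρ hρ (Q ^ (M - k))‖) ^ 2
        ≤ ‖ktE ρ hρ (Q ^ M)‖ ^ 2 := by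
      rw [mul_pow, hnq, hnq, ← pow_mul, mul_comm k 2, pow_mul]
      exact h
    calc (μ * o * N) ^ k * ‖ktE ρ hρ (Q ^ (M - k))‖
        = Real.sqrt (((μ * o * N) ^ k * ‖ktE ρ hρ (Q ^ (M - k))‖) ^ 2) :=
          (Real.sqrt_sq (by positivity)).symm
      _ ≤ Real.sqrt (‖ktE ρ hρ (Q ^ M)‖ ^ 2) := Real.sqrt_le_sqrt hsq
      _ = ‖ktE ρ hρ (Q ^ M)‖ := Real.sqrt_sq (norm_nonneg _)
  -- binomial expansion
  have hcomm : Commute R Q := hQR.symm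
  have natMul : ∀ (X : Matrix n n ℂ) (cc : ℕ), X * (cc : Matrix n n ℂ) = (cc : ℂ) • X := by
    intro X cc
    rw [← (Nat.cast_commute cc X).eq, ← nsmul_eq_mul, Nat.cast_smul_eq_nsmul]
  have hbin : Op ^ M = Q ^ M +
      ∑ k ∈ Finset.range M, ((M.choose (k+1) : ℂ)) • (R ^ (k+1) * Q ^ (M - (k+1))) := by
    have h0 : Op = R + Q := by rw [hOp, add_comm]
    rw [h0, Commute.add_pow hcomm, Finset.sum_range_succ']
    simp only [natMul, pow_zero, Nat.sub_zero, Nat.choose_zero_right, Nat.cast_one, one_smul,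
      Matrix.one_mul, Matrix.mul_one]
    rw [add_comm]
  set resid : EuclideanSpace ℂ (n × n) :=
    ∑ k ∈ Finset.range M, ((M.choose (k+1) : ℂ)) • ktE ρ hρ (R ^ (k+1) * Q ^ (M - (k+1)))
    with hresdef
  have heO : ktE ρ hρ (Op ^ M) = ktE ρ hρ (Q ^ M) + resid := by
    rw [hbin, ktE_add hρ, ktE_sum hρ]
    congr 1
    rw [hresdef]
    exact Finset.sum_congr rfl (fun k _ => ktE_smul hρ _ _)
  set x : ℝ := a / (μ * N) with hxdef
  have hx0 : 0 ≤ x := by positivity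
  have hxid : x * (μ * o * N) = o * a := by
    rw [hxdef]
    field_simp
  -- residual bound
  have hterm : ∀ k, k < M →
      ‖ktE ρ hρ (R ^ (k+1) * Q ^ (M - (k+1)))‖ ≤ x ^ (k+1) * ‖ktE ρ hρ (Q ^ M)‖ := by
    intro k hk
    have h1 : ‖ktE ρ hρ (R ^ (k+1) * Q ^ (M - (k+1)))‖
        ≤ ‖R ^ (k+1)‖ * ‖ktE ρ hρ (Q ^ (M - (k+1)))‖ := ktE_mul_le hρ _ _
    have h2 : ‖R ^ (k+1)‖ ≤ (o * a) ^ (k+1) :=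
      le_trans (norm_pow_le' R (Nat.succ_pos k)) (pow_le_pow_left₀ (norm_nonneg R) hRn _)
    have h3 : ‖R ^ (k+1)‖ * ‖ktE ρ hρ (Q ^ (M - (k+1)))‖
        ≤ (o * a) ^ (k+1) * ‖ktE ρ hρ (Q ^ (M - (k+1)))‖ :=
      mul_le_mul_of_nonneg_right h2 (norm_nonneg _)
    have h4 : (o * a) ^ (k+1) * ‖ktE ρ hρ (Q ^ (M - (k+1)))‖
        ≤ x ^ (k+1) * ‖ktE ρ hρ (Q ^ M)‖ := by
      have h5 := hdesc (k+1) (by omega)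
      calc (o * a) ^ (k+1) * ‖ktE ρ hρ (Q ^ (M - (k+1)))‖
          = x ^ (k+1) * ((μ * o * N) ^ (k+1) * ‖ktE ρ hρ (Q ^ (M - (k+1)))‖) := by
            rw [← mul_assoc, ← mul_pow, hxid]
        _ ≤ x ^ (k+1) * ‖ktE ρ hρ (Q ^ M)‖ :=
            mul_le_mul_of_nonneg_left h5 (by positivity)
    linarith
  have hressum : ‖resid‖ ≤ ((1 + x) ^ M - 1) * ‖ktE ρ hρ (Q ^ M)‖ := by
    have h1 : ‖resid‖ ≤ ∑ k ∈ Finset.range M,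
        ((M.choose (k+1) : ℝ) * x ^ (k+1)) * ‖ktE ρ hρ (Q ^ M)‖ := by
      refine le_trans (norm_sum_le _ _) (Finset.sum_le_sum ?_)
      intro k hk
      rw [norm_smul, Complex.norm_natCast, mul_assoc]
      exact mul_le_mul_of_nonneg_left (hterm k (Finset.mem_range.mp hk)) (Nat.cast_nonneg _)
    have h2 : ∑ k ∈ Finset.range M, ((M.choose (k+1) : ℝ) * x ^ (k+1)) * ‖ktE ρ hρ (Q ^ M)‖
        = ((1 + x) ^ M - 1) * ‖ktE ρ hρ (Q ^ M)‖ := by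
      rw [← Finset.sum_mul]
      congr 1
      have hbinR : (x + 1) ^ M = ∑ k ∈ Finset.range (M + 1),
          x ^ k * 1 ^ (M - k) * (M.choose k : ℝ) := add_pow x 1 M
      rw [Finset.sum_range_succ'] at hbinR
      simp only [one_pow, mul_one, pow_zero, Nat.choose_zero_right, Nat.cast_one, one_mul] at hbinR
      have : (1 + x) ^ M = (x + 1) ^ M := by ring
      rw [this, hbinR]
      rw [add_sub_cancel_right]
      exact Finset.sum_congr rfl (fun k _ => by ring)
    linarith
  -- (1+x)^M ≤ exp (μ/16)
  have hMx : (M : ℝ) * x ≤ μ / 16 := by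
    have hMa : (M : ℝ) * (16 * a) ≤ μ ^ 2 * N := by
      rw [le_div_iff₀ (by positivity)] at hM
      linarith
    rw [hxdef, show (M:ℝ) * (a / (μ * N)) = ((M:ℝ) * a) / (μ * N) from by ring,
      div_le_div_iff₀ (by positivity) (by norm_num : (0:ℝ) < 16)]
    calc (M : ℝ) * a * 16 = (M : ℝ) * (16 * a) := by ring
      _ ≤ μ ^ 2 * N := hMa
      _ = μ * (μ * N) := by ring
  have hfac : (1 + x) ^ M ≤ Real.exp (μ / 16) := by
    have h1 : 1 + x ≤ Real.exp x := by have := Real.add_one_le_exp x; linarith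
    have h2 : (1 + x) ^ M ≤ (Real.exp x) ^ M := pow_le_pow_left₀ (by positivity) h1 M
    have h3 : (Real.exp x) ^ M = Real.exp ((M : ℝ) * x) := (Real.exp_nat_mul x M).symm
    have h4 : Real.exp ((M : ℝ) * x) ≤ Real.exp (μ / 16) := Real.exp_le_exp.mpr hMx
    calc (1 + x) ^ M ≤ (Real.exp x) ^ M := h2
      _ = Real.exp ((M : ℝ) * x) := h3
      _ ≤ Real.exp (μ / 16) := h4
  have hexp16 : Real.exp (μ / 16) < 2 := ktExpLtTwo (by linarith)
  have hexp8 : Real.exp (μ / 8) < 2 := ktExpLtTwo (by linarith)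
  have htri : ‖ktE ρ hρ (Q ^ M)‖ ≤ ‖ktE ρ hρ (Op ^ M)‖ + ‖resid‖ := by
    have h : ktE ρ hρ (Q ^ M) = ktE ρ hρ (Op ^ M) - resid := by rw [heO]; abel
    rw [h]
    exact norm_sub_le _ _
  have hlow : (2 - Real.exp (μ / 16)) * ‖ktE ρ hρ (Q ^ M)‖ ≤ ‖ktE ρ hρ (Op ^ M)‖ := by
    have h1 : ‖resid‖ ≤ (Real.exp (μ / 16) - 1) * ‖ktE ρ hρ (Q ^ M)‖ := by
      refine le_trans hressum (mul_le_mul_of_nonneg_right ?_ (norm_nonneg _))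
      linarith
    linarith [htri, h1]
  have hAM : ktA ρ Q M = av M := rfl
  have heq8 : Real.exp (μ / 16) * Real.exp (μ / 16) = Real.exp (μ / 8) := by
    rw [← Real.exp_add]
    ring_nf
  constructor
  · rw [hAM]
    exact mul_pos (by linarith) hMpos
  · rw [hAM]
    have hO2 : ((Op ^ M * ρ * Opᴴ ^ M).trace).re = ‖ktE ρ hρ (Op ^ M)‖ ^ 2 :=
      (ktE_pow_norm_sq hρ Op M).symm
    rw [hO2]
    have h2e : 0 ≤ 2 - Real.exp (μ / 16) := by linarith
    have hsq : ((2 - Real.exp (μ / 16)) * ‖ktE ρ hρ (Q ^ M)‖) ^ 2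
        ≤ ‖ktE ρ hρ (Op ^ M)‖ ^ 2 :=
      pow_le_pow_left₀ (by positivity) hlow 2
    have hqm : ‖ktE ρ hρ (Q ^ M)‖ ^ 2 = av M := hnq M
    have hexpand : ((2 - Real.exp (μ / 16)) * ‖ktE ρ hρ (Q ^ M)‖) ^ 2
        = (4 - 4 * Real.exp (μ / 16) + Real.exp (μ / 8)) * av M := by
      calc ((2 - Real.exp (μ / 16)) * ‖ktE ρ hρ (Q ^ M)‖) ^ 2
          = (4 - 4 * Real.exp (μ / 16) + Real.exp (μ / 16) * Real.exp (μ / 16))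
            * ‖ktE ρ hρ (Q ^ M)‖ ^ 2 := by ring
        _ = (4 - 4 * Real.exp (μ / 16) + Real.exp (μ / 8)) * av M := by rw [heq8, hqm]
    have hnonneg : 0 ≤ 2 * (Real.exp (μ / 16) - 1) ^ 2 * av M :=
      mul_nonneg (by positivity) (hnn M)
    have hstep : (2 - Real.exp (μ / 8)) * av M
        = (4 - 4 * Real.exp (μ / 16) + Real.exp (μ / 8)) * av M
          - 2 * (Real.exp (μ / 16) - 1) ^ 2 * av M := by
      rw [← heq8]; ring
    linarith [hsq, hexpand, hstep, hnonneg]
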